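/- Let E and E′ be vector lattices and let F and F′ be normed lattices. Suppose given maps ψ: E → F, φ_E: E → E′, φ_F: F → F′ and ψ′: E′ → F′ satisfying ψ′ ∘ φ_E = φ_F ∘ ψ, where φ_E is a positive linear map with φ_E(E⁺) = (E′)⁺, and φ_F is a continuous surjective lattice homomorphism. If ψ is an almost interval preserving linear map, then ψ′ is an almost interval preserving linear map. -/

import Mathlib

open Set

/-- Pushing the almost interval preserving property down a commutative
square: if `ψ' ∘ φ_E = φ_F ∘ ψ` with `φ_E` positive linear and `φ_E(E⁺) = (E')⁺`, `φ_F` a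
continuous surjective lattice homomorphism, and `ψ` an almost interval preserving linear
map, then `ψ'` is an almost interval preserving linear map. -/
theorem pushing_down_almostIntervalPreserving
    {E E' F F' : Type*}
    [AddCommGroup E] [Lattice E] [CovariantClass E E (· + ·) (· ≤ ·)]
    [Module ℝ E] [PosSMulMono ℝ E]
    [AddCommGroup E'] [Lattice E'] [CovariantClass E' E' (· + ·) (· ≤ ·)]
    [Module ℝ E'] [PosSMulMono ℝ E']
    [NormedAddCommGroup F] [Lattice F] [IsOrderedAddMonoid F] [HasSolidNorm F] [NormedSpace ℝ F]
    [NormedAddCommGroup F'] [Lattice F'] [IsOrderedAddMonoid F'] [HasSolidNorm F'] [NormedSpace ℝ F']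
    (ψ : E →ₗ[ℝ] F) (φE : E →ₗ[ℝ] E') (φF : F →L[ℝ] F') (ψ' : E' → F')
    (hcomm : ∀ x : E, ψ' (φE x) = φF (ψ x))
    (hφE_pos : ∀ x : E, 0 ≤ x → 0 ≤ φE x)
    (hφE_cone : φE '' {x : E | 0 ≤ x} = {y : E' | 0 ≤ y})
    (hφF_hom : ∀ x y : F, φF (x ⊔ y) = φF x ⊔ φF y)
    (hφF_surj : Function.Surjective φF)
    (hψ_pos : ∀ x : E, 0 ≤ x → 0 ≤ ψ x)
    (hψ_aip : ∀ x : E, 0 ≤ x → Icc (0 : F) (ψ x) = closure (ψ '' Icc 0 x)) :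
    (∀ a b : E', ψ' (a + b) = ψ' a + ψ' b) ∧
    (∀ (c : ℝ) (a : E'), ψ' (c • a) = c • ψ' a) ∧
    (∀ a : E', 0 ≤ a → 0 ≤ ψ' a) ∧
    (∀ a : E', 0 ≤ a → Icc (0 : F') (ψ' a) = closure (ψ' '' Icc 0 a)) := by
  -- φE is surjective
  classical
  have hsurj : Function.Surjective φE := by
    intro a
    have h1 : (a ⊔ 0 : E') ∈ φE '' {x : E | 0 ≤ x} := by
      rw [hφE_cone]; exact le_sup_right
    have h2 : ((-a) ⊔ 0 : E') ∈ φE '' {x : E | 0 ≤ x} := by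
      rw [hφE_cone]; exact le_sup_right
    obtain ⟨x1, -, hx1⟩ := h1
    obtain ⟨x2, -, hx2⟩ := h2
    refine ⟨x1 - x2, ?_⟩
    rw [map_sub, hx1, hx2]
    have := posPart_sub_negPart a
    simpa [posPart_def, negPart_def] using this
  have hadd : ∀ a b : E', ψ' (a + b) = ψ' a + ψ' b := by
    intro a b
    obtain ⟨x, rfl⟩ := hsurj a
    obtain ⟨y, rfl⟩ := hsurj b
    rw [← map_add, hcomm, hcomm, hcomm, map_add, map_add]
  have hsmul : ∀ (c : ℝ) (a : E'), ψ' (c • a) = c • ψ' a := by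
    intro c a
    obtain ⟨x, rfl⟩ := hsurj a
    rw [← map_smul, hcomm, hcomm, map_smul, map_smul]
  -- φF is positive
  have hφF_pos : ∀ v : F, 0 ≤ v → 0 ≤ φF v := by
    intro v hv
    have h := hφF_hom v 0
    rw [sup_of_le_left hv, map_zero] at h
    rw [h]; exact le_sup_right
  -- φF preserves infima
  have hφF_inf : ∀ x y : F, φF (x ⊓ y) = φF x ⊓ φF y := by
    intro x y
    have : (x ⊓ y : F) = -((-x) ⊔ (-y)) := by
      rw [neg_sup, neg_neg, neg_neg]
    rw [this, map_neg, hφF_hom, map_neg, map_neg, neg_sup, neg_neg, neg_neg]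
  have hpos : ∀ a : E', 0 ≤ a → 0 ≤ ψ' a := by
    intro a ha
    have : a ∈ φE '' {x : E | 0 ≤ x} := by rw [hφE_cone]; exact ha
    obtain ⟨x, hx, rfl⟩ := this
    rw [hcomm]
    exact hφF_pos _ (hψ_pos x hx)
  refine ⟨hadd, hsmul, hpos, ?_⟩
  intro a ha
  have : a ∈ φE '' {x : E | 0 ≤ x} := by rw [hφE_cone]; exact ha
  obtain ⟨x, hx, rfl⟩ := this
  apply Subset.antisymm
  · -- [0, ψ' a] ⊆ closure (ψ' '' [0, a])
    intro w hw
    rw [hcomm] at hw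
    -- lift w to v ∈ [0, ψ x]
    obtain ⟨v, hv⟩ := hφF_surj w
    set v' : F := (v ⊔ 0) ⊓ ψ x with hv'def
    have hψx : (0 : F) ≤ ψ x := hψ_pos x hx
    have hv'mem : v' ∈ Icc (0 : F) (ψ x) :=
      ⟨le_inf (le_sup_right) hψx, inf_le_right⟩
    have hφv' : φF v' = w := by
      rw [hv'def, hφF_inf, hφF_hom, hv, map_zero, sup_of_le_left hw.1,
        inf_of_le_left hw.2]
    rw [hψ_aip x hx] at hv'mem
    have : w ∈ φF '' closure (ψ '' Icc 0 x) := ⟨v', hv'mem, hφv'⟩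
    have hsub : φF '' closure (ψ '' Icc 0 x) ⊆ closure (φF '' (ψ '' Icc 0 x)) :=
      image_closure_subset_closure_image φF.continuous
    refine closure_mono ?_ (hsub this)
    rintro _ ⟨_, ⟨y, hy, rfl⟩, rfl⟩
    refine ⟨φE y, ⟨hφE_pos y hy.1, ?_⟩, hcomm y⟩
    have : 0 ≤ φE (x - y) := hφE_pos _ (sub_nonneg.mpr hy.2)
    rw [map_sub] at this
    exact sub_nonneg.mp this
  · -- closure (ψ' '' [0, a]) ⊆ [0, ψ' a]
    refine closure_minimal ?_ isClosed_Icc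
    rintro _ ⟨b, hb, rfl⟩
    refine ⟨hpos b hb.1, ?_⟩
    have h1 : 0 ≤ ψ' (φE x - b) := hpos _ (sub_nonneg.mpr hb.2)
    have h2 : ψ' (φE x) = ψ' (φE x - b) + ψ' b := by
      rw [← hadd, sub_add_cancel]
    rw [h2]
    simpa using add_le_add_right h1 (ψ' b)
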